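/- For s, t real with s > (4/5)·n²·t > 0 and n ≥ 2, the maximum absolute determinant over n×n upper Hessenberg matrices with subdiagonal entries s and upper-triangular entries in [0,t] equals s^{n−1}·t + ⌊n/2⌋·⌊(n−1)/2⌋·s^{n−3}·t³. -/

import Mathlib

set_option maxHeartbeats 1000000

/-- `A` is an `n×n` upper Hessenberg matrix with subdiagonal entries `s`
and upper-triangular entries in `[0,t]`. -/
def IsUpperHessenbergIcc (s t : ℝ) {n : ℕ} (A : Matrix (Fin n) (Fin n) ℝ) : Prop :=
  (∀ i j : Fin n, (i : ℕ) = (j : ℕ) + 1 → A i j = s) ∧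
  (∀ i j : Fin n, (j : ℕ) + 1 < (i : ℕ) → A i j = 0) ∧
  (∀ i j : Fin n, (i : ℕ) ≤ (j : ℕ) → A i j ∈ Set.Icc (0 : ℝ) t)

namespace MaxAbsDetAux

open Matrix Finset





variable (s : ℝ) (a : ℕ → ℕ → ℝ)

/-- m×m matrix: columns of `a`, except the last column is column `q` of `a`. -/
def Nmat (m q : ℕ) : Matrix (Fin m) (Fin m) ℝ :=
  Matrix.of fun i j => a (i : ℕ) (if (j : ℕ) = m - 1 then q else (j : ℕ))

/-- leading m×m minor -/
def Dm (m : ℕ) : ℝ := (Nmat a m (m - 1)).det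

lemma Dm_eq (m : ℕ) : Dm a m = (Matrix.of fun i j : Fin m => a (i : ℕ) (j : ℕ)).det := by
  unfold Dm Nmat
  congr 1
  ext i j
  simp only [of_apply]
  split_ifs with h
  · rw [h]
  · rfl

lemma Dm_zero : Dm a 0 = 1 := by
  unfold Dm
  exact Matrix.det_fin_zero

variable (h1 : ∀ j, a (j + 1) j = s) (h2 : ∀ i j, j + 1 < i → a i j = 0)

include h1 h2 in
lemma Nmat_succ (m : ℕ) (hm : 1 ≤ m) (q : ℕ) :
    (Nmat a (m + 1) q).det = a m q * Dm a m - s * (Nmat a m q).det := by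
  rw [Matrix.det_succ_row (Nmat a (m + 1) q) (Fin.last m)]
  have hB : (Fin.last m : ℕ) = m := rfl
  -- the two special indices
  set jA : Fin (m + 1) := ⟨m - 1, by omega⟩ with hjA
  have hmemA : jA ∈ (univ : Finset (Fin (m + 1))) := mem_univ _
  rw [← Finset.add_sum_erase _ _ (Finset.mem_univ (Fin.last m))]
  have herase : ∑ j ∈ (univ : Finset (Fin (m+1))).erase (Fin.last m),
      (-1 : ℝ) ^ ((Fin.last m : ℕ) + (j : ℕ)) * (Nmat a (m+1) q (Fin.last m) j) *
        ((Nmat a (m+1) q).submatrix (Fin.last m).succAbove j.succAbove).det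
      = (-1 : ℝ) ^ ((Fin.last m : ℕ) + (jA : ℕ)) * (Nmat a (m+1) q (Fin.last m) jA) *
        ((Nmat a (m+1) q).submatrix (Fin.last m).succAbove jA.succAbove).det := by
    apply Finset.sum_eq_single_of_mem
    · rw [Finset.mem_erase]
      refine ⟨?_, mem_univ _⟩
      intro h
      have := congrArg (fun x : Fin (m+1) => (x : ℕ)) h
      simp [hjA] at this
      omega
    · intro j hj hne
      have hjlt : (j : ℕ) < m - 1 := by
        have hjm : (j : ℕ) ≠ m := by
          intro h
          apply (Finset.mem_erase.mp hj).1
          apply Fin.ext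
          simpa using h
        have hjm1 : (j : ℕ) ≠ m - 1 := by
          intro h
          apply hne
          apply Fin.ext
          simpa [hjA] using h
        omega
      have hz : Nmat a (m+1) q (Fin.last m) j = 0 := by
        simp only [Nmat, of_apply, hB]
        rw [if_neg (by omega : (j:ℕ) ≠ m + 1 - 1)]
        exact h2 m j (by omega)
      rw [hz]
      ring
  rw [herase]
  -- evaluate entries
  have hentA : Nmat a (m+1) q (Fin.last m) jA = s := by
    simp only [Nmat, of_apply, hB, hjA]
    rw [if_neg (by omega : (m - 1 : ℕ) ≠ m + 1 - 1)]
    have h := h1 (m - 1)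
    rwa [show m - 1 + 1 = m by omega] at h
  have hentB : Nmat a (m+1) q (Fin.last m) (Fin.last m) = a m q := by
    simp only [Nmat, of_apply, hB]
    rw [if_pos (by omega : (m : ℕ) = m + 1 - 1)]
  -- identify the submatrices
  have hsubB : (Nmat a (m+1) q).submatrix (Fin.last m).succAbove (Fin.last m).succAbove
      = Nmat a m (m - 1) := by
    ext r c
    simp only [submatrix_apply, Nmat, of_apply, Fin.succAbove_last, Fin.coe_castSucc]
    have hc : (c : ℕ) < m := c.isLt
    rw [if_neg (by omega : (c : ℕ) ≠ m + 1 - 1)]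
    split_ifs with h
    · rw [h]
    · rfl
  have hsubA : (Nmat a (m+1) q).submatrix (Fin.last m).succAbove jA.succAbove
      = Nmat a m q := by
    ext r c
    simp only [submatrix_apply, Nmat, of_apply, Fin.succAbove_last, Fin.coe_castSucc]
    have hc : (c : ℕ) < m := c.isLt
    have hval : ((jA.succAbove c : Fin (m+1)) : ℕ) = if (c : ℕ) < m - 1 then (c : ℕ) else (c : ℕ) + 1 := by
      rcases lt_or_ge (c : ℕ) (m - 1) with h | h
      · rw [if_pos h]
        rw [Fin.succAbove_of_castSucc_lt]
        · rfl
        · simp [Fin.lt_def, hjA]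
          omega
      · rw [if_neg (by omega)]
        rw [Fin.succAbove_of_le_castSucc]
        · rfl
        · simp [Fin.le_def, hjA]
          omega
    rw [hval]
    rcases lt_or_ge (c : ℕ) (m - 1) with h | h
    · rw [if_pos h, if_neg (by omega : (c:ℕ) ≠ m + 1 - 1), if_neg (by omega : (c:ℕ) ≠ m - 1)]
    · have hc1 : (c : ℕ) = m - 1 := by omega
      rw [if_neg (show ¬(c:ℕ) < m - 1 by omega), if_pos (show (c:ℕ) + 1 = m + 1 - 1 by omega),
        if_pos hc1]
  rw [hentA, hentB, hsubA, hsubB]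
  have hjAv : (jA : ℕ) = m - 1 := rfl
  have hsign1 : (-1 : ℝ) ^ ((Fin.last m : ℕ) + ((Fin.last m : ℕ))) = 1 := by
    rw [hB]
    exact Even.neg_one_pow ⟨m, rfl⟩
  have hsign2 : (-1 : ℝ) ^ ((Fin.last m : ℕ) + (jA : ℕ)) = -1 := by
    rw [hB, hjAv]
    have : m + (m - 1) = 2 * (m - 1) + 1 := by omega
    rw [this, pow_succ, pow_mul]
    norm_num
  rw [hsign1, hsign2]
  unfold Dm
  ring


/-- normalized sequence -/
noncomputable def gseq : ℕ → ℝ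
  | 0 => 1
  | m + 1 => -∑ k : Fin (m + 1), (a (k : ℕ) m / s) * gseq (k : ℕ)
termination_by m => m
decreasing_by exact k.isLt

lemma gseq_zero : gseq s a 0 = 1 := by simp [gseq]

lemma gseq_succ (m : ℕ) :
    gseq s a (m + 1) = -∑ k ∈ range (m + 1), (a k m / s) * gseq s a k := by
  rw [show gseq s a (m+1) = -∑ k : Fin (m + 1), (a (k : ℕ) m / s) * gseq s a (k : ℕ) from by
    rw [gseq], ← Fin.sum_univ_eq_sum_range]

include h1 h2 in
lemma Nmat_det (m q : ℕ) :
    (Nmat a (m + 1) q).det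
      = ∑ k ∈ range (m + 1), (-1) ^ (m - k) * s ^ (m - k) * a k q * Dm a k := by
  induction m generalizing q with
  | zero =>
    rw [show (1 : ℕ) = 0 + 1 from rfl] at *
    rw [Matrix.det_fin_one]
    simp [Nmat, Dm_zero]
  | succ m ih =>
    rw [Nmat_succ s a h1 h2 (m + 1) (by omega) q, ih q]
    rw [Finset.sum_range_succ
      (fun k => (-1 : ℝ) ^ (m + 1 - k) * s ^ (m + 1 - k) * a k q * Dm a k) (m + 1)]
    have hstep : ∀ k ∈ range (m + 1),
        (-1 : ℝ) ^ (m + 1 - k) * s ^ (m + 1 - k) * a k q * Dm a k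
          = -s * ((-1) ^ (m - k) * s ^ (m - k) * a k q * Dm a k) := by
      intro k hk
      have hk' : k ≤ m := by have := Finset.mem_range.mp hk; omega
      rw [show m + 1 - k = (m - k) + 1 by omega, pow_succ, pow_succ]
      ring
    rw [Finset.sum_congr rfl hstep, ← Finset.mul_sum]
    simp only [Nat.sub_self, pow_zero]
    ring

include h1 h2 in
lemma Dm_succ (m : ℕ) :
    Dm a (m + 1) = ∑ k ∈ range (m + 1), (-1) ^ (m - k) * s ^ (m - k) * a k m * Dm a k :=
  Nmat_det s a h1 h2 m m

include h1 h2 in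
lemma Dm_gseq (hs : s ≠ 0) : ∀ m, Dm a m = (-1) ^ m * s ^ m * gseq s a m := by
  intro m
  induction m using Nat.strong_induction_on with
  | _ m ih =>
    match m with
    | 0 => simp [Dm_zero, gseq_zero]
    | Nat.succ m =>
      rw [Dm_succ s a h1 h2 m, gseq_succ]
      have hsum : ∑ k ∈ range (m+1), (-1:ℝ)^(m-k) * s^(m-k) * a k m * Dm a k =
          ∑ k ∈ range (m+1), (-1:ℝ)^(m-k) * s^(m-k) * a k m * ((-1)^k * s^k * gseq s a k) :=
        Finset.sum_congr rfl (fun k hk => by rw [ih k (Finset.mem_range.mp hk)])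
      rw [hsum]
      rw [mul_neg, Finset.mul_sum, ← Finset.sum_neg_distrib]
      refine Finset.sum_congr rfl fun k hk => ?_
      have hk' : k ≤ m := by have := Finset.mem_range.mp hk; omega
      have e1 : (-1:ℝ)^(m-k) * (-1:ℝ)^k = (-1:ℝ)^m := by
        rw [← pow_add]; congr 1; omega
      have e2 : s^(m-k) * s^k = s^m := by
        rw [← pow_add]; congr 1; omega
      calc (-1:ℝ)^(m-k) * s^(m-k) * a k m * ((-1)^k * s^k * gseq s a k)
          = ((-1:ℝ)^(m-k) * (-1:ℝ)^k) * (s^(m-k) * s^k) * (a k m * gseq s a k) := by ring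
        _ = (-1:ℝ)^m * s^m * (a k m * gseq s a k) := by rw [e1, e2]
        _ = -((-1:ℝ)^(m+1) * s^(m+1) * (a k m / s * gseq s a k)) := by
            rw [pow_succ, pow_succ]
            field_simp

lemma nat_prod_bound (n a b : ℕ) (hn : 2 ≤ n) (hab : a + b ≤ n - 1) :
    a * b ≤ n / 2 * ((n - 1) / 2) := by
  have key : ∀ m : ℕ, m * m / 4 = (m + 1) / 2 * (m / 2) := by
    intro m
    rcases Nat.even_or_odd m with ⟨k, hk⟩ | ⟨k, hk⟩
    · subst hk
      have h4 : (k + k) * (k + k) = 4 * (k * k) := by ring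
      rw [h4, Nat.mul_div_cancel_left _ (by norm_num)]
      rw [show (k + k + 1) / 2 = k by omega, show (k + k) / 2 = k by omega]
    · subst hk
      have h4 : (2 * k + 1) * (2 * k + 1) = 4 * (k * k + k) + 1 := by ring
      rw [h4, show (4 * (k * k + k) + 1) / 4 = k * k + k by omega,
        show (2 * k + 1 + 1) / 2 = k + 1 by omega, show (2 * k + 1) / 2 = k by omega]
      ring
  have h1 : a * b * 4 ≤ (a + b) * (a + b) := by zify; nlinarith [sq_nonneg ((a:ℤ) - b)]
  have h2 : (a + b) * (a + b) ≤ (n - 1) * (n - 1) := Nat.mul_le_mul hab hab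
  have h3 : a * b ≤ (n - 1) * (n - 1) / 4 :=
    (Nat.le_div_iff_mul_le (by norm_num)).2 (le_trans h1 h2)
  rw [key (n - 1), show n - 1 + 1 = n by omega] at h3
  exact h3

lemma core (n : ℕ) (hn : 2 ≤ n) (τ : ℝ) (hτ0 : 0 < τ)
    (hτ1 : 4 / 5 * (n : ℝ) ^ 2 * τ < 1)
    (g : ℕ → ℝ) (b : ℕ → ℕ → ℝ)
    (hb0 : ∀ k m, 0 ≤ b k m) (hb1 : ∀ k m, k ≤ m → m < n → b k m ≤ τ)
    (hg0 : g 0 = 1)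
    (hrec : ∀ m, m < n → g (m + 1) = -∑ k ∈ range (m + 1), b k m * g k) :
    |g n| ≤ τ + ((n / 2 : ℕ) : ℝ) * (((n - 1) / 2 : ℕ) : ℝ) * τ ^ 3 := by
  set c : ℝ := ((n / 2 : ℕ) : ℝ) * (((n - 1) / 2 : ℕ) : ℝ) with hcdef
  have hc0 : 0 ≤ c := by positivity
  have hn2 : (2 : ℝ) ≤ (n : ℝ) := by exact_mod_cast hn
  have hnpos : (0 : ℝ) < (n : ℝ) ^ 2 := by positivity
  have hτb : τ < 5 / (4 * (n : ℝ) ^ 2) := by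
    rw [lt_div_iff₀ (by positivity)]
    nlinarith
  have hcb : c ≤ (n : ℝ) ^ 2 / 4 := by
    have e1 : ((n / 2 : ℕ) : ℝ) ≤ (n : ℝ) / 2 := Nat.cast_div_le
    have e2 : (((n - 1) / 2 : ℕ) : ℝ) ≤ ((n - 1 : ℕ) : ℝ) / 2 := Nat.cast_div_le
    have e3 : ((n - 1 : ℕ) : ℝ) ≤ (n : ℝ) := by
      have : (n - 1 : ℕ) ≤ n := Nat.sub_le n 1
      exact_mod_cast this
    have e4 : (((n - 1) / 2 : ℕ) : ℝ) ≤ (n : ℝ) / 2 := by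
      calc (((n - 1) / 2 : ℕ) : ℝ) ≤ ((n - 1 : ℕ) : ℝ) / 2 := e2
        _ ≤ (n : ℝ) / 2 := by linarith
    calc c ≤ ((n : ℝ) / 2) * ((n : ℝ) / 2) := by
          apply mul_le_mul e1 e4 (by positivity) (by positivity)
      _ = (n : ℝ) ^ 2 / 4 := by ring
  have hτ2 : τ ^ 2 ≤ (5 / (4 * (n : ℝ) ^ 2)) ^ 2 := by nlinarith
  have hτc' : τ ^ 2 * c ≤ 25 / (64 * (n : ℝ) ^ 2) := by
    calc τ ^ 2 * c ≤ (5 / (4 * (n : ℝ) ^ 2)) ^ 2 * ((n : ℝ) ^ 2 / 4) := by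
          apply mul_le_mul hτ2 hcb hc0 (by positivity)
      _ = 25 / (64 * (n : ℝ) ^ 2) := by field_simp; ring
  have hτc : τ ^ 2 * c ≤ 25 / 256 := by
    calc τ ^ 2 * c ≤ 25 / (64 * (n : ℝ) ^ 2) := hτc'
      _ ≤ 25 / 256 := by
          rw [div_le_div_iff₀ (by positivity) (by norm_num)]
          nlinarith
  have hτcc : τ ^ 2 * c * c ≤ 25 / 256 := by
    calc τ ^ 2 * c * c ≤ 25 / (64 * (n : ℝ) ^ 2) * ((n : ℝ) ^ 2 / 4) := by
          apply mul_le_mul hτc' hcb hc0 (by positivity)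
      _ = 25 / 256 := by field_simp; ring
  -- the positive/negative parts
  set u : ℕ → ℝ := fun k => max (g k) 0 with hudef
  set v : ℕ → ℝ := fun k => max (-g k) 0 with hvdef
  have hu0 : ∀ k, 0 ≤ u k := fun k => le_max_right _ _
  have hv0 : ∀ k, 0 ≤ v k := fun k => le_max_right _ _
  have hgu : ∀ k, g k ≤ u k := fun k => le_max_left _ _
  have hgv : ∀ k, -g k ≤ v k := fun k => le_max_left _ _
  set W : ℕ → ℝ := fun m => ∑ i ∈ Ico 1 m, u i with hWdef
  set V : ℕ → ℝ := fun m => ∑ i ∈ Ico 1 m, v i with hVdef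
  have hW0 : ∀ m, 0 ≤ W m := fun m => Finset.sum_nonneg fun i _ => hu0 i
  have hV0 : ∀ m, 0 ≤ V m := fun m => Finset.sum_nonneg fun i _ => hv0 i
  set S : ℝ := W n with hSdef
  have hS0 : 0 ≤ S := hW0 n
  have hWS : ∀ m, m ≤ n → W m ≤ S := by
    intro m hm
    apply Finset.sum_le_sum_of_subset_of_nonneg
    · exact Finset.Ico_subset_Ico le_rfl hm
    · intro i _ _; exact hu0 i
  -- L1
  have L1 : ∀ m, 1 ≤ m → m ≤ n → -g m ≤ τ * (1 + W m) := by
    intro m hm1 hmn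
    obtain ⟨m', rfl⟩ : ∃ m', m = m' + 1 := ⟨m - 1, by omega⟩
    rw [hrec m' (by omega), neg_neg]
    have step : ∑ k ∈ range (m' + 1), b k m' * g k ≤ ∑ k ∈ range (m' + 1), τ * u k := by
      apply Finset.sum_le_sum
      intro k hk
      have hkm : k ≤ m' := by have := Finset.mem_range.mp hk; omega
      rcases le_or_gt 0 (g k) with h | h
      · calc b k m' * g k ≤ τ * g k :=
              mul_le_mul_of_nonneg_right (hb1 k m' hkm (by omega)) h
          _ ≤ τ * u k := mul_le_mul_of_nonneg_left (hgu k) hτ0.le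
      · calc b k m' * g k ≤ 0 := mul_nonpos_of_nonneg_of_nonpos (hb0 k m') h.le
          _ ≤ τ * u k := mul_nonneg hτ0.le (hu0 k)
    calc ∑ k ∈ range (m' + 1), b k m' * g k ≤ ∑ k ∈ range (m' + 1), τ * u k := step
      _ = τ * (1 + W (m' + 1)) := by
          rw [Finset.range_eq_Ico, Finset.sum_eq_sum_Ico_succ_bot (by omega : 0 < m' + 1)]
          have hu00 : u 0 = 1 := by simp [hudef, hg0]
          rw [hu00, hWdef, ← Finset.mul_sum]
          ring
  -- L2
  have L2 : ∀ m, 1 ≤ m → m ≤ n → g m ≤ τ * V m := by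
    intro m hm1 hmn
    obtain ⟨m', rfl⟩ : ∃ m', m = m' + 1 := ⟨m - 1, by omega⟩
    rw [hrec m' (by omega)]
    have step : ∀ k ∈ range (m' + 1), -(b k m' * g k) ≤ τ * v k := by
      intro k hk
      have hkm : k ≤ m' := by have := Finset.mem_range.mp hk; omega
      rcases le_or_gt 0 (-g k) with h | h
      · calc -(b k m' * g k) = b k m' * (-g k) := by ring
          _ ≤ τ * (-g k) := mul_le_mul_of_nonneg_right (hb1 k m' hkm (by omega)) h
          _ ≤ τ * v k := mul_le_mul_of_nonneg_left (hgv k) hτ0.le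
      · calc -(b k m' * g k) = b k m' * (-g k) := by ring
          _ ≤ 0 := mul_nonpos_of_nonneg_of_nonpos (hb0 k m') h.le
          _ ≤ τ * v k := mul_nonneg hτ0.le (hv0 k)
    calc -∑ k ∈ range (m' + 1), b k m' * g k
        = ∑ k ∈ range (m' + 1), -(b k m' * g k) := by rw [Finset.sum_neg_distrib]
      _ ≤ ∑ k ∈ range (m' + 1), τ * v k := Finset.sum_le_sum step
      _ = τ * V (m' + 1) := by
          rw [Finset.range_eq_Ico, Finset.sum_eq_sum_Ico_succ_bot (by omega : 0 < m' + 1)]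
          have hv00 : v 0 = 0 := by simp [hvdef, hg0]
          rw [hv00, hVdef, ← Finset.mul_sum]
          ring
  -- L3, L4
  have L3 : ∀ k, 1 ≤ k → k ≤ n → u k ≤ τ * V k := by
    intro k h1 h2
    exact max_le (L2 k h1 h2) (mul_nonneg hτ0.le (hV0 k))
  have L4 : ∀ j, 1 ≤ j → j ≤ n → v j ≤ τ * (1 + W j) := by
    intro j h1 h2
    apply max_le (L1 j h1 h2)
    have := hW0 j
    positivity
  have hvS : ∀ j, 1 ≤ j → j ≤ n → v j ≤ τ * (1 + S) := by
    intro j h1 h2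
    calc v j ≤ τ * (1 + W j) := L4 j h1 h2
      _ ≤ τ * (1 + S) := by
          apply mul_le_mul_of_nonneg_left _ hτ0.le
          linarith [hWS j h2]
  -- P N
  set P : Finset ℕ := (Ico 1 n).filter (fun k => 0 < g k) with hPdef
  set N : Finset ℕ := (Ico 1 n).filter (fun k => g k < 0) with hNdef
  have hPsub : P ⊆ Ico 1 n := Finset.filter_subset _ _
  have hNsub : N ⊆ Ico 1 n := Finset.filter_subset _ _
  have hPmem : ∀ k ∈ P, 1 ≤ k ∧ k < n ∧ 0 < g k := by
    intro k hk
    have h1 := Finset.mem_filter.mp hk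
    have h2 := Finset.mem_Ico.mp h1.1
    exact ⟨h2.1, h2.2, h1.2⟩
  have hNmem : ∀ k ∈ N, 1 ≤ k ∧ k < n ∧ g k < 0 := by
    intro k hk
    have h1 := Finset.mem_filter.mp hk
    have h2 := Finset.mem_Ico.mp h1.1
    exact ⟨h2.1, h2.2, h1.2⟩
  -- restriction of sums
  have hSP : ∀ m, m ≤ n → W m = ∑ k ∈ P.filter (· < m), u k := by
    intro m hm
    have hset : P.filter (· < m) = (Ico 1 m).filter (fun k => 0 < g k) := by
      ext j
      simp only [hPdef, Finset.mem_filter, Finset.mem_Ico]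
      constructor
      · rintro ⟨⟨⟨hj1, hj2⟩, hj3⟩, hj4⟩; exact ⟨⟨hj1, hj4⟩, hj3⟩
      · rintro ⟨⟨hj1, hj4⟩, hj3⟩; exact ⟨⟨⟨hj1, lt_of_lt_of_le hj4 hm⟩, hj3⟩, hj4⟩
    rw [hset]
    symm
    apply Finset.sum_filter_of_ne
    intro x hx hne
    rcases lt_or_ge 0 (g x) with h | h
    · exact h
    · exact absurd (max_eq_right h) hne
  have hSN : ∀ m, m ≤ n → V m = ∑ k ∈ N.filter (· < m), v k := by
    intro m hm
    have hset : N.filter (· < m) = (Ico 1 m).filter (fun k => g k < 0) := by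
      ext j
      simp only [hNdef, Finset.mem_filter, Finset.mem_Ico]
      constructor
      · rintro ⟨⟨⟨hj1, hj2⟩, hj3⟩, hj4⟩; exact ⟨⟨hj1, hj4⟩, hj3⟩
      · rintro ⟨⟨hj1, hj4⟩, hj3⟩; exact ⟨⟨⟨hj1, lt_of_lt_of_le hj4 hm⟩, hj3⟩, hj4⟩
    rw [hset]
    symm
    apply Finset.sum_filter_of_ne
    intro x hx hne
    rcases lt_or_ge (g x) 0 with h | h
    · exact h
    · exact absurd (max_eq_right (by linarith)) hne
  have hPfull : P.filter (· < n) = P := by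
    apply Finset.filter_true_of_mem
    intro k hk
    exact (hPmem k hk).2.1
  -- counting bound
  have hpq : (P.card : ℝ) * (N.card : ℝ) ≤ c := by
    have hdisj : Disjoint P N := by
      rw [Finset.disjoint_left]
      intro k hkP hkN
      exact absurd ((hPmem k hkP).2.2) (not_lt.mpr (hNmem k hkN).2.2.le)
    have hcard : P.card + N.card ≤ n - 1 := by
      calc P.card + N.card = (P ∪ N).card := (Finset.card_union_of_disjoint hdisj).symm
        _ ≤ (Ico 1 n).card := Finset.card_le_card (Finset.union_subset hPsub hNsub)
        _ = n - 1 := Nat.card_Ico 1 n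
    have := nat_prod_bound n P.card N.card hn hcard
    rw [hcdef]
    exact_mod_cast this
  -- step 1
  have step1 : S ≤ τ * ∑ k ∈ P, ∑ j ∈ N.filter (· < k), v j := by
    have e : S = ∑ k ∈ P, u k := by rw [hSdef, hSP n le_rfl, hPfull]
    rw [e, Finset.mul_sum]
    apply Finset.sum_le_sum
    intro k hk
    obtain ⟨hk1, hk2, _⟩ := hPmem k hk
    calc u k ≤ τ * V k := L3 k hk1 hk2.le
      _ = τ * ∑ j ∈ N.filter (· < k), v j := by rw [hSN k hk2.le]
  -- case split
  have hSbound : S ≤ τ ^ 2 * c := by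
    by_cases hQ : ∃ j ∈ N, (∃ k ∈ P, j < k) ∧ 0 < W j
    · -- bad pattern exists
      obtain ⟨j₀, hj₀N, ⟨k₀, hk₀P, hjk₀⟩, hWj₀⟩ := hQ
      have : ∃ i₀ ∈ Ico 1 j₀, u i₀ ≠ 0 :=
        Finset.exists_ne_zero_of_sum_ne_zero (ne_of_gt hWj₀)
      obtain ⟨i₀, hi₀mem, hui₀⟩ := this
      have hi₀Ico := Finset.mem_Ico.mp hi₀mem
      have hgi₀ : 0 < g i₀ := by
        by_contra h
        exact hui₀ (max_eq_right (not_lt.mp h))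
      have hi₀P : i₀ ∈ P := by
        rw [hPdef, Finset.mem_filter, Finset.mem_Ico]
        exact ⟨⟨hi₀Ico.1, lt_trans hi₀Ico.2 (hNmem j₀ hj₀N).2.1⟩, hgi₀⟩
      have hi₀j₀ : i₀ < j₀ := hi₀Ico.2
      have hP1 : 1 ≤ P.card := Finset.card_pos.mpr ⟨i₀, hi₀P⟩
      have hN1 : 1 ≤ N.card := Finset.card_pos.mpr ⟨j₀, hj₀N⟩
      have hc1 : 1 ≤ c := by
        have h1 : (1 : ℝ) ≤ (P.card : ℝ) := by exact_mod_cast hP1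
        have h2 : (1 : ℝ) ≤ (N.card : ℝ) := by exact_mod_cast hN1
        nlinarith
      -- X bound
      have hXR : ∑ k ∈ P, ((N.filter (· < k)).card : ℝ) ≤ (P.card : ℝ) * N.card - 1 := by
        rw [← Finset.add_sum_erase _ _ hi₀P]
        have h1 : ((N.filter (· < i₀)).card : ℝ) ≤ (N.card : ℝ) - 1 := by
          have hsub : N.filter (· < i₀) ⊆ N.erase j₀ := by
            intro x hx
            rw [Finset.mem_erase]
            refine ⟨?_, (Finset.mem_filter.mp hx).1⟩
            intro hxj
            have := (Finset.mem_filter.mp hx).2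
            omega
          have hh : (N.filter (· < i₀)).card + 1 ≤ N.card := by
            have := Finset.card_le_card hsub
            rw [Finset.card_erase_of_mem hj₀N] at this
            omega
          have : ((N.filter (· < i₀)).card : ℝ) + 1 ≤ (N.card : ℝ) := by exact_mod_cast hh
          linarith
        have h2 : ∑ k ∈ P.erase i₀, ((N.filter (· < k)).card : ℝ)
            ≤ ((P.card : ℝ) - 1) * N.card := by
          calc ∑ k ∈ P.erase i₀, ((N.filter (· < k)).card : ℝ)
              ≤ ∑ _k ∈ P.erase i₀, (N.card : ℝ) := by
                apply Finset.sum_le_sum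
                intro k _
                exact_mod_cast Finset.card_filter_le _ _
            _ = ((P.erase i₀).card : ℝ) * N.card := by rw [Finset.sum_const, nsmul_eq_mul]
            _ = ((P.card : ℝ) - 1) * N.card := by
                rw [Finset.card_erase_of_mem hi₀P]
                have : ((P.card - 1 : ℕ) : ℝ) = (P.card : ℝ) - 1 := by
                  rw [Nat.cast_sub hP1]; norm_num
                rw [this]
        have hexp : ((P.card : ℝ) - 1) * N.card = (P.card : ℝ) * N.card - N.card := by ring
        have hNR : (1 : ℝ) ≤ (N.card : ℝ) := by exact_mod_cast hN1
        linarith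
      -- step 2
      have step2 : S ≤ τ ^ 2 * (1 + S) * ((P.card : ℝ) * N.card - 1) := by
        calc S ≤ τ * ∑ k ∈ P, ∑ j ∈ N.filter (· < k), v j := step1
          _ ≤ τ * ∑ k ∈ P, ∑ _j ∈ N.filter (· < k), τ * (1 + S) := by
              apply mul_le_mul_of_nonneg_left _ hτ0.le
              apply Finset.sum_le_sum
              intro k _
              apply Finset.sum_le_sum
              intro j hj
              have hjN : j ∈ N := Finset.mem_of_mem_filter j hj
              obtain ⟨hj1, hj2, _⟩ := hNmem j hjN
              exact hvS j hj1 hj2.le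
          _ = τ * (τ * (1 + S)) * ∑ k ∈ P, ((N.filter (· < k)).card : ℝ) := by
              rw [Finset.mul_sum]
              rw [Finset.mul_sum]
              apply Finset.sum_congr rfl
              intro k _
              rw [Finset.sum_const, nsmul_eq_mul]
              ring
          _ ≤ τ * (τ * (1 + S)) * ((P.card : ℝ) * N.card - 1) := by
              apply mul_le_mul_of_nonneg_left hXR
              positivity
          _ = τ ^ 2 * (1 + S) * ((P.card : ℝ) * N.card - 1) := by ring
      have hXc : (P.card : ℝ) * N.card - 1 ≤ c - 1 := by linarith
      have step3 : S ≤ τ ^ 2 * (1 + S) * (c - 1) := by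
        calc S ≤ τ ^ 2 * (1 + S) * ((P.card : ℝ) * N.card - 1) := step2
          _ ≤ τ ^ 2 * (1 + S) * (c - 1) := by
              apply mul_le_mul_of_nonneg_left hXc
              positivity
      -- numerics
      have hsmall : τ ^ 2 * (c - 1) ≤ 25 / 256 := by nlinarith [sq_nonneg τ]
      have key : S * (1 - τ ^ 2 * (c - 1)) ≤ τ ^ 2 * (c - 1) := by nlinarith [step3]
      have hSlin : S ≤ (256 / 231) * (τ ^ 2 * (c - 1)) := by nlinarith [key, hsmall, hS0]
      nlinarith [step3, hSlin, hτcc, hτc, hS0, sq_nonneg τ, hc1]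
    · -- no bad pattern
      push_neg at hQ
      calc S ≤ τ * ∑ k ∈ P, ∑ j ∈ N.filter (· < k), v j := step1
        _ ≤ τ * ∑ k ∈ P, ∑ _j ∈ N.filter (· < k), τ := by
            apply mul_le_mul_of_nonneg_left _ hτ0.le
            apply Finset.sum_le_sum
            intro k hk
            apply Finset.sum_le_sum
            intro j hj
            have hjN : j ∈ N := Finset.mem_of_mem_filter j hj
            have hjk : j < k := by
              have := (Finset.mem_filter.mp hj).2
              simpa using this
            obtain ⟨hj1, hj2, _⟩ := hNmem j hjN
            have hWj : W j = 0 := by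
              have h := hQ j hjN ⟨k, hk, hjk⟩
              exact le_antisymm h (hW0 j)
            calc v j ≤ τ * (1 + W j) := L4 j hj1 hj2.le
              _ = τ := by rw [hWj]; ring
        _ = τ * ∑ k ∈ P, ((N.filter (· < k)).card : ℝ) * τ := by
            apply congrArg
            apply Finset.sum_congr rfl
            intro k _
            rw [Finset.sum_const, nsmul_eq_mul]
        _ ≤ τ * ∑ _k ∈ P, (N.card : ℝ) * τ := by
            apply mul_le_mul_of_nonneg_left _ hτ0.le
            apply Finset.sum_le_sum
            intro k _
            apply mul_le_mul_of_nonneg_right _ hτ0.le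
            exact_mod_cast Finset.card_filter_le _ _
        _ = τ ^ 2 * ((P.card : ℝ) * N.card) := by
            rw [Finset.sum_const, nsmul_eq_mul]
            ring
        _ ≤ τ ^ 2 * c := by nlinarith [sq_nonneg τ]
  -- final assembly
  have hgn1 : -g n ≤ τ * (1 + S) := L1 n (by omega) le_rfl
  have hgn2 : g n ≤ τ * V n := L2 n (by omega) le_rfl
  have hVn : V n ≤ (n : ℝ) * (τ * (1 + S)) := by
    calc V n ≤ ∑ _j ∈ Ico 1 n, τ * (1 + S) := by
          apply Finset.sum_le_sum
          intro j hj
          have := Finset.mem_Ico.mp hj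
          exact hvS j this.1 this.2.le
      _ = ((Ico 1 n).card : ℝ) * (τ * (1 + S)) := by rw [Finset.sum_const, nsmul_eq_mul]
      _ ≤ (n : ℝ) * (τ * (1 + S)) := by
          apply mul_le_mul_of_nonneg_right
          · rw [Nat.card_Ico]
            have : ((n - 1 : ℕ) : ℝ) ≤ (n : ℝ) := by
              exact_mod_cast Nat.sub_le n 1
            exact this
          · positivity
  rw [abs_le]
  constructor
  · -- -(τ + c τ³) ≤ g n
    have h1 : τ * (1 + S) ≤ τ * (1 + τ ^ 2 * c) :=
      mul_le_mul_of_nonneg_left (by linarith) hτ0.le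
    have h1' : τ * (1 + τ ^ 2 * c) = τ + c * τ ^ 3 := by ring
    linarith [hgn1, h1]
  · -- g n ≤ τ + c τ³
    have h2 : g n ≤ (n : ℝ) * τ ^ 2 * (1 + S) := by
      calc g n ≤ τ * V n := hgn2
        _ ≤ τ * ((n : ℝ) * (τ * (1 + S))) := mul_le_mul_of_nonneg_left hVn hτ0.le
        _ = (n : ℝ) * τ ^ 2 * (1 + S) := by ring
    have h3 : (n : ℝ) * τ < 5 / (4 * (n : ℝ)) := by
      rw [lt_div_iff₀ (by positivity)]
      calc (n : ℝ) * τ * (4 * n) = 4 * (n : ℝ) ^ 2 * τ := by ring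
        _ < 4 * (n:ℝ)^2 * (5 / (4 * (n : ℝ) ^ 2)) := by
            apply mul_lt_mul_of_pos_left hτb (by positivity)
        _ = 5 := by field_simp
    have h4 : 5 / (4 * (n : ℝ)) ≤ 5 / 8 := by
      rw [div_le_div_iff₀ (by positivity) (by norm_num)]
      nlinarith
    have h5 : 1 + S ≤ 281 / 256 := by linarith [hτc, hSbound]
    have h6 : (n : ℝ) * τ ^ 2 * (1 + S) ≤ τ := by
      have e1 : (n:ℝ) * τ ≤ 5/8 := le_trans h3.le h4
      have e2 : τ * (1 + S) ≤ τ * (281/256) := mul_le_mul_of_nonneg_left h5 hτ0.le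
      have e3 : 0 ≤ τ * (1 + S) := by positivity
      calc (n : ℝ) * τ ^ 2 * (1 + S) = ((n:ℝ) * τ) * (τ * (1 + S)) := by ring
        _ ≤ (5/8) * (τ * (281/256)) := mul_le_mul e1 e2 e3 (by norm_num)
        _ = (1405/2048) * τ := by ring
        _ ≤ τ := by linarith
    have e4 : 0 ≤ c * τ ^ 3 := by positivity
    linarith [h2, h6]
/-- the extremal matrix entries -/
noncomputable def con (n : ℕ) (s t : ℝ) : ℕ → ℕ → ℝ := fun i j =>
  if i = j + 1 then s
  else if j + 1 < i then 0
  else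
    if j + 1 ≤ (n - 1) / 2 then (if i = 0 then t else 0)
    else if j + 1 < n then (if 1 ≤ i ∧ i ≤ (n - 1) / 2 then t else 0)
    else (if i = 0 ∨ (n - 1) / 2 + 1 ≤ i then t else 0)

lemma con_sub (s t : ℝ) (n : ℕ) (j : ℕ) : con n s t (j + 1) j = s := by simp [con]

lemma con_low (s t : ℝ) (n : ℕ) (i j : ℕ) (h : j + 1 < i) : con n s t i j = 0 := by
  rw [con, if_neg (by omega), if_pos h]

lemma con_gN (s t : ℝ) (n : ℕ) (hn : 2 ≤ n) : ∀ m, 1 ≤ m → m ≤ (n - 1) / 2 → gseq s (con n s t) m = -(t / s) := by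
  intro m h1 h2
  obtain ⟨m', rfl⟩ : ∃ m', m = m' + 1 := ⟨m - 1, by omega⟩
  rw [gseq_succ]
  have hterm : ∀ k ∈ range (m' + 1),
      con n s t k m' / s * gseq s (con n s t) k = if k = 0 then t / s else 0 := by
    intro k hk
    have hk' : k < m' + 1 := Finset.mem_range.mp hk
    have hcon : con n s t k m' = if k = 0 then t else 0 := by
      rw [con, if_neg (by omega), if_neg (by omega), if_pos (by omega : m' + 1 ≤ (n - 1) / 2)]
    rw [hcon]
    by_cases hk0 : k = 0
    · subst hk0
      rw [gseq_zero]
      simp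
    · simp [hk0]
  rw [Finset.sum_congr rfl hterm, Finset.sum_ite_eq' (range (m' + 1)) 0 (fun _ => t / s),
    if_pos (Finset.mem_range.mpr (by omega))]

lemma con_gP (s t : ℝ) (n : ℕ) (hn : 2 ≤ n) : ∀ m, (n - 1) / 2 + 1 ≤ m → m ≤ n - 1 →
    gseq s (con n s t) m = (((n - 1) / 2 : ℕ) : ℝ) * (t / s) ^ 2 := by
  intro m h1 h2
  obtain ⟨m', rfl⟩ : ∃ m', m = m' + 1 := ⟨m - 1, by omega⟩
  rw [gseq_succ]
  have hterm : ∀ k ∈ range (m' + 1),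
      con n s t k m' / s * gseq s (con n s t) k
        = if 1 ≤ k ∧ k ≤ (n - 1) / 2 then -((t / s) ^ 2) else 0 := by
    intro k hk
    have hk' : k < m' + 1 := Finset.mem_range.mp hk
    have hcon : con n s t k m' = if 1 ≤ k ∧ k ≤ (n - 1) / 2 then t else 0 := by
      rw [con, if_neg (by omega), if_neg (by omega), if_neg (by omega : ¬ m' + 1 ≤ (n - 1) / 2),
        if_pos (by omega : m' + 1 < n)]
    rw [hcon]
    by_cases hk0 : 1 ≤ k ∧ k ≤ (n - 1) / 2
    · rw [if_pos hk0, if_pos hk0, con_gN s t n hn k hk0.1 hk0.2]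
      ring
    · rw [if_neg hk0, if_neg hk0]
      simp
  rw [Finset.sum_congr rfl hterm, ← Finset.sum_filter]
  have hset : (range (m' + 1)).filter (fun k => 1 ≤ k ∧ k ≤ (n - 1) / 2) = Icc 1 ((n - 1) / 2) := by
    ext k
    simp only [Finset.mem_filter, Finset.mem_range, Finset.mem_Icc]
    omega
  rw [hset, Finset.sum_const, Nat.card_Icc]
  simp only [nsmul_eq_mul, Nat.add_sub_cancel]
  push_cast
  ring

lemma con_gLast (s t : ℝ) (n : ℕ) (hn : 2 ≤ n) :
    gseq s (con n s t) n
      = -(t / s) - (((n - 1) / 2 : ℕ) : ℝ) * ((n - 1 - (n - 1) / 2 : ℕ) : ℝ) * (t / s) ^ 3 := by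
  set m' := n - 1 with hm'def
  have hn1 : m' + 1 = n := by omega
  have key := gseq_succ s (con n s t) m'
  rw [hn1] at key
  rw [key]
  have hterm : ∀ k ∈ range n,
      con n s t k m' / s * gseq s (con n s t) k
        = (if k = 0 then t / s else 0)
          + (if (n - 1) / 2 + 1 ≤ k then
              t / s * ((((n - 1) / 2 : ℕ) : ℝ) * (t / s) ^ 2) else 0) := by
    intro k hk
    have hk' : k < n := Finset.mem_range.mp hk
    have hcon : con n s t k m' = if k = 0 ∨ (n - 1) / 2 + 1 ≤ k then t else 0 := by
      rw [con, if_neg (by omega), if_neg (by omega), if_neg (by omega : ¬ m' + 1 ≤ (n - 1) / 2),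
        if_neg (by omega : ¬ m' + 1 < n)]
    rw [hcon]
    by_cases hk0 : k = 0
    · subst hk0
      rw [if_pos (Or.inl rfl), gseq_zero, if_pos rfl, if_neg (by omega)]
      simp
    · by_cases hk1 : (n - 1) / 2 + 1 ≤ k
      · rw [if_pos (Or.inr hk1), if_neg hk0, if_pos hk1,
          con_gP s t n hn k hk1 (by omega)]
        ring
      · rw [if_neg (by tauto), if_neg hk0, if_neg hk1]
        simp
  rw [Finset.sum_congr rfl hterm, Finset.sum_add_distrib,
    Finset.sum_ite_eq' (range n) 0 (fun _ => t / s),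
    if_pos (Finset.mem_range.mpr (by omega)), ← Finset.sum_filter]
  have hset : (range n).filter (fun k => (n - 1) / 2 + 1 ≤ k)
      = Icc ((n - 1) / 2 + 1) (n - 1) := by
    ext k
    simp only [Finset.mem_filter, Finset.mem_range, Finset.mem_Icc]
    omega
  rw [hset, Finset.sum_const, Nat.card_Icc]
  have hcard : n - 1 + 1 - ((n - 1) / 2 + 1) = n - 1 - (n - 1) / 2 := by omega
  rw [hcard, nsmul_eq_mul]
  push_cast
  ring


lemma value_eq (n : ℕ) (hn : 2 ≤ n) (s t : ℝ) (hs0 : 0 < s) :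
    s ^ n * (t / s + ((n / 2 : ℕ) : ℝ) * (((n - 1) / 2 : ℕ) : ℝ) * (t / s) ^ 3)
      = s ^ (n - 1) * t + ((n / 2 : ℕ) : ℝ) * (((n - 1) / 2 : ℕ) : ℝ) * s ^ (n - 3) * t ^ 3 := by
  have hsne : s ≠ 0 := ne_of_gt hs0
  rcases eq_or_lt_of_le hn with h2 | h3
  · rw [← h2]
    norm_num
    field_simp
  · have hA : s ^ n * (t / s) = s ^ (n - 1) * t := by
      obtain ⟨m, hm⟩ : ∃ m, n = m + 1 := ⟨n - 1, by omega⟩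
      rw [hm]
      simp only [Nat.add_sub_cancel]
      rw [pow_succ]
      field_simp
    have hB : s ^ n * (t / s) ^ 3 = s ^ (n - 3) * t ^ 3 := by
      obtain ⟨m, hm⟩ : ∃ m, n = m + 3 := ⟨n - 3, by omega⟩
      rw [hm]
      simp only [Nat.add_sub_cancel]
      rw [pow_add]
      field_simp
    calc s ^ n * (t / s + ((n / 2 : ℕ) : ℝ) * (((n - 1) / 2 : ℕ) : ℝ) * (t / s) ^ 3)
        = s ^ n * (t / s)
          + ((n / 2 : ℕ) : ℝ) * (((n - 1) / 2 : ℕ) : ℝ) * (s ^ n * (t / s) ^ 3) := by ring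
      _ = s ^ (n - 1) * t
          + ((n / 2 : ℕ) : ℝ) * (((n - 1) / 2 : ℕ) : ℝ) * (s ^ (n - 3) * t ^ 3) := by
          rw [hA, hB]
      _ = s ^ (n - 1) * t
          + ((n / 2 : ℕ) : ℝ) * (((n - 1) / 2 : ℕ) : ℝ) * s ^ (n - 3) * t ^ 3 := by ring

end MaxAbsDetAux

open MaxAbsDetAux

theorem max_abs_det_case_III (n : ℕ) (hn : 2 ≤ n) (s t : ℝ) (ht : 0 < t)
    (hs : s > 4 / 5 * (n : ℝ) ^ 2 * t) :
    IsGreatest {x : ℝ | ∃ A : Matrix (Fin n) (Fin n) ℝ,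
        IsUpperHessenbergIcc s t A ∧ x = |A.det|}
      (s ^ (n - 1) * t +
        ((n / 2 : ℕ) : ℝ) * (((n - 1) / 2 : ℕ) : ℝ) * s ^ (n - 3) * t ^ 3) := by
  have hnR : (0 : ℝ) < (n : ℝ) := by
    have : 0 < n := by omega
    exact_mod_cast this
  have hs0 : 0 < s := by
    have h0 : (0 : ℝ) < 4 / 5 * (n : ℝ) ^ 2 * t := by positivity
    linarith
  have hsne : s ≠ 0 := ne_of_gt hs0
  constructor
  · -- membership: the extremal matrix
    refine ⟨Matrix.of fun i j : Fin n => con n s t (i : ℕ) (j : ℕ), ⟨?_, ?_, ?_⟩, ?_⟩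
    · intro i j hij
      simp only [Matrix.of_apply]
      rw [con, if_pos hij]
    · intro i j hij
      simp only [Matrix.of_apply]
      rw [con, if_neg (by omega), if_pos hij]
    · intro i j hij
      simp only [Matrix.of_apply]
      rw [Set.mem_Icc, con, if_neg (by omega), if_neg (by omega)]
      split_ifs <;> constructor <;> linarith
    · have hdet : (Matrix.of fun i j : Fin n => con n s t (i : ℕ) (j : ℕ)).det
          = Dm (con n s t) n := (Dm_eq (con n s t) n).symm
      have hg := Dm_gseq s (con n s t)
        (fun j => con_sub s t n j) (fun i j h => con_low s t n i j h) hsne n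
      have hβ : ((n - 1 - (n - 1) / 2 : ℕ) : ℝ) = ((n / 2 : ℕ) : ℝ) :=
        congrArg (fun k : ℕ => (k : ℝ)) (by omega)
      have hgn : gseq s (con n s t) n
          = -(t / s + ((n / 2 : ℕ) : ℝ) * (((n - 1) / 2 : ℕ) : ℝ) * (t / s) ^ 3) := by
        rw [con_gLast s t n hn, hβ]
        ring
      have hX : (0 : ℝ) ≤ t / s + ((n / 2 : ℕ) : ℝ) * (((n - 1) / 2 : ℕ) : ℝ) * (t / s) ^ 3 := by
        positivity
      rw [hdet, hg, hgn, abs_mul, abs_neg, abs_of_nonneg hX, abs_mul, abs_pow, abs_neg,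
        abs_one, one_pow, one_mul, abs_of_pos (pow_pos hs0 n)]
      exact (value_eq n hn s t hs0).symm
  · -- upper bound
    rintro x ⟨A, ⟨hA1, hA2, hA3⟩, rfl⟩
    set a : ℕ → ℕ → ℝ := fun i j =>
      if h : i < n ∧ j < n then A ⟨i, h.1⟩ ⟨j, h.2⟩ else if i = j + 1 then s else 0 with hadef
    have h1 : ∀ j, a (j + 1) j = s := by
      intro j
      by_cases h : j + 1 < n ∧ j < n
      · simp only [hadef]
        rw [dif_pos h]
        exact hA1 ⟨j + 1, h.1⟩ ⟨j, h.2⟩ rfl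
      · simp only [hadef]
        rw [dif_neg h]
        simp
    have h2 : ∀ i j, j + 1 < i → a i j = 0 := by
      intro i j hij
      by_cases h : i < n ∧ j < n
      · simp only [hadef]
        rw [dif_pos h]
        exact hA2 ⟨i, h.1⟩ ⟨j, h.2⟩ hij
      · simp only [hadef]
        rw [dif_neg h, if_neg (by omega)]
    have ha_nonneg : ∀ k m, 0 ≤ a k m := by
      intro k m
      by_cases h : k < n ∧ m < n
      · simp only [hadef]
        rw [dif_pos h]
        rcases lt_trichotomy k (m + 1) with hc | hc | hc
        · exact (hA3 ⟨k, h.1⟩ ⟨m, h.2⟩ (by show k ≤ m; omega)).1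
        · rw [hA1 ⟨k, h.1⟩ ⟨m, h.2⟩ hc]
          exact hs0.le
        · rw [hA2 ⟨k, h.1⟩ ⟨m, h.2⟩ hc]
      · simp only [hadef]
        rw [dif_neg h]
        split_ifs
        · exact hs0.le
        · exact le_rfl
    have ha_le : ∀ k m, k ≤ m → m < n → a k m ≤ t := by
      intro k m hkm hmn
      have h : k < n ∧ m < n := ⟨by omega, hmn⟩
      simp only [hadef]
      rw [dif_pos h]
      exact (hA3 ⟨k, h.1⟩ ⟨m, h.2⟩ hkm).2
    have hdet : A.det = Dm a n := by
      rw [Dm_eq]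
      congr 1
      ext i j
      simp only [Matrix.of_apply, hadef]
      rw [dif_pos ⟨i.isLt, j.isLt⟩]
    have hg := Dm_gseq s a h1 h2 hsne n
    have hτ0 : 0 < t / s := by positivity
    have hτ1 : 4 / 5 * (n : ℝ) ^ 2 * (t / s) < 1 := by
      rw [show 4 / 5 * (n : ℝ) ^ 2 * (t / s) = (4 / 5 * (n : ℝ) ^ 2 * t) / s from by ring,
        div_lt_one hs0]
      exact hs
    have hb0 : ∀ k m, 0 ≤ a k m / s := fun k m => div_nonneg (ha_nonneg k m) hs0.le
    have hb1 : ∀ k m, k ≤ m → m < n → a k m / s ≤ t / s := by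
      intro k m hkm hmn
      gcongr
      exact ha_le k m hkm hmn
    have hcore := core n hn (t / s) hτ0 hτ1 (gseq s a) (fun k m => a k m / s)
      hb0 hb1 (gseq_zero s a) (fun m _ => gseq_succ s a m)
    calc |A.det| = s ^ n * |gseq s a n| := by
          rw [hdet, hg, abs_mul, abs_mul, abs_pow, abs_neg, abs_one, one_pow, one_mul,
            abs_of_pos (pow_pos hs0 n)]
      _ ≤ s ^ n * (t / s + ((n / 2 : ℕ) : ℝ) * (((n - 1) / 2 : ℕ) : ℝ) * (t / s) ^ 3) :=
          mul_le_mul_of_nonneg_left hcore (by positivity)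
      _ = s ^ (n - 1) * t + ((n / 2 : ℕ) : ℝ) * (((n - 1) / 2 : ℕ) : ℝ) * s ^ (n - 3) * t ^ 3 :=
          value_eq n hn s t hs0
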